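/- In the simplex setting, for all integers n with 3 ≤ n ≤ m, Σ_{σ∈A_m} σ(Adj_n) = n(n−1)(n−2) · ((m−3)!/2) · Adj_m in ℝ[G]. -/

import Mathlib

noncomputable section
open scoped Classical

/-- The Laplacian `Δ = |S|·1 - Σ_{s ∈ S} s` in the real group algebra `ℝ[G]`. -/
def lap {G : Type*} [Group G] (S : Finset G) : MonoidAlgebra ℝ G :=
  (S.card : MonoidAlgebra ℝ G) - ∑ s ∈ S, MonoidAlgebra.of ℝ G s

/-- The star involution on `ℝ[G]` induced by `g ↦ g⁻¹`. -/
def starG {G : Type*} [Group G] (x : MonoidAlgebra ℝ G) : MonoidAlgebra ℝ G :=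
  MonoidAlgebra.mapDomain (fun g => g⁻¹) x

/-- `g` lies in the ball of radius `R` about the identity in the word metric
induced by the (symmetric) set `S`. -/
def inBall {G : Type*} [Group G] (S : Set G) (R : ℕ) (g : G) : Prop :=
  ∃ l : List G, (∀ x ∈ l, x ∈ S) ∧ l.length ≤ R ∧ l.prod = g

/-- `x ∈ Σ²_R ℝ[G]`: `x` is a finite sum of hermitian squares `ξ_i* ξ_i` with each
`ξ_i` supported in the ball of radius `R` about the identity. -/
def SOS {G : Type*} [Group G] (S : Set G) (R : ℕ) (x : MonoidAlgebra ℝ G) : Prop :=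
  ∃ (N : ℕ) (ξ : Fin N → MonoidAlgebra ℝ G),
    (∀ i, ∀ g ∈ (ξ i).coeff.support, inBall S R g) ∧
    x = ∑ i, starG (ξ i) * ξ i

/-- The simplex setting: a group `G` with a finite symmetric generating set `S`
(with `1 ∉ S`), an action of the alternating group `A_m` on `G` by automorphisms
preserving `S`, and an `A_m`-equivariant labelling of `S` by edges (2-element
subsets) of `{1,…,m}` such that generators with disjoint labels commute. -/
structure SimplexSetting (m : ℕ) (G : Type*) [Group G] where
  S : Finset G
  one_not_mem : (1 : G) ∉ S
  symm : ∀ s ∈ S, s⁻¹ ∈ S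
  generates : Subgroup.closure (S : Set G) = ⊤
  act : alternatingGroup (Fin m) →* MulAut G
  act_mem : ∀ (σ : alternatingGroup (Fin m)), ∀ s ∈ S, act σ s ∈ S
  lbl : G → Finset (Fin m)
  lbl_card : ∀ s ∈ S, (lbl s).card = 2
  lbl_equivariant : ∀ (σ : alternatingGroup (Fin m)), ∀ s ∈ S,
    lbl (act σ s) = (lbl s).image (σ : Equiv.Perm (Fin m))
  comm : ∀ s ∈ S, ∀ t ∈ S, Disjoint (lbl s) (lbl t) → Commute s t

namespace SimplexSetting

variable {m : ℕ} {G : Type*} [Group G] (P : SimplexSetting m G)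

/-- The set `E_n` of edges of the simplex spanned by the first `n` vertices. -/
def edges (m n : ℕ) : Finset (Finset (Fin m)) :=
  Finset.univ.filter (fun e => e.card = 2 ∧ ∀ i ∈ e, (i : ℕ) < n)

/-- `S_e`: the generators labelled by the edge `e`. -/
def Se (e : Finset (Fin m)) : Finset G := P.S.filter (fun s => P.lbl s = e)

/-- The edge Laplacian `Δ_e = |S_e|·1 - Σ_{t ∈ S_e} t`. -/
def De (e : Finset (Fin m)) : MonoidAlgebra ℝ G :=
  ((P.Se e).card : MonoidAlgebra ℝ G) - ∑ t ∈ P.Se e, MonoidAlgebra.of ℝ G t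

/-- `Δ_n = Σ_{e ∈ E_n} Δ_e`. -/
def Dn (n : ℕ) : MonoidAlgebra ℝ G := ∑ e ∈ edges m n, P.De e

/-- `Sq_n = Σ_{e ∈ E_n} Δ_e²`. -/
def Sq (n : ℕ) : MonoidAlgebra ℝ G := ∑ e ∈ edges m n, (P.De e) ^ 2

/-- `Adj_n`: the sum of `Δ_e Δ_f` over ordered pairs of edges of `E_n` sharing
exactly one vertex. -/
def Adj (n : ℕ) : MonoidAlgebra ℝ G :=
  ∑ e ∈ edges m n, ∑ f ∈ (edges m n).filter (fun f => (e ∩ f).card = 1), P.De e * P.De f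

/-- `Op_n`: the sum of `Δ_e Δ_f` over ordered pairs of disjoint edges of `E_n`. -/
def Op (n : ℕ) : MonoidAlgebra ℝ G :=
  ∑ e ∈ edges m n, ∑ f ∈ (edges m n).filter (fun f => e ∩ f = ∅), P.De e * P.De f

/-- The induced action of `A_m` on the group algebra `ℝ[G]`. -/
def algAct (σ : alternatingGroup (Fin m)) (x : MonoidAlgebra ℝ G) : MonoidAlgebra ℝ G :=
  MonoidAlgebra.mapDomain (P.act σ) x

/-- `h_n = (n-2)·(n-1)!/2`, as a real number. -/
def hr (n : ℕ) : ℝ := ((n : ℝ) - 2) * (Nat.factorial (n - 1)) / 2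

end SimplexSetting


open Finset

/-- The set of the first `n` vertices of `Fin m`. -/
def Vset (m n : ℕ) : Finset (Fin m) := Finset.univ.filter (fun i => (i : ℕ) < n)

lemma Vset_card {m n : ℕ} (h : n ≤ m) : (Vset m n).card = n := by
  have : Vset m n = Finset.map ⟨Fin.castLE h, Fin.castLE_injective h⟩ Finset.univ := by
    ext x
    simp only [Vset, mem_filter, mem_univ, true_and, mem_map, Function.Embedding.coeFn_mk]
    constructor
    · intro hx; exact ⟨⟨(x : ℕ), hx⟩, rfl⟩
    · rintro ⟨y, -, rfl⟩; exact y.2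
  rw [this, card_map, card_univ, Fintype.card_fin]

lemma exists_perm_image {α : Type*} [Fintype α] [DecidableEq α] {s t : Finset α}
    (h : s.card = t.card) : ∃ π : Equiv.Perm α, s.image π = t := by
  have hc : (sᶜ : Finset α).card = (tᶜ : Finset α).card := by
    simp [Finset.card_compl, h]
  let e : {x // x ∈ s} ≃ {x // x ∈ t} := Finset.equivOfCardEq h
  let e' : {x // x ∈ (sᶜ : Finset α)} ≃ {x // x ∈ (tᶜ : Finset α)} := Finset.equivOfCardEq hc
  let e₂ : {x // ¬ x ∈ s} ≃ {x // ¬ x ∈ t} :=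
    ((Equiv.subtypeEquivRight (fun x => (Finset.mem_compl (s := s)).symm)).trans e').trans
      (Equiv.subtypeEquivRight (fun x => Finset.mem_compl))
  let π : Equiv.Perm α :=
    ((Equiv.sumCompl (· ∈ s)).symm.trans (e.sumCongr e₂)).trans (Equiv.sumCompl (· ∈ t))
  refine ⟨π, Finset.eq_of_subset_of_card_le ?_ ?_⟩
  · intro y hy
    rw [Finset.mem_image] at hy
    obtain ⟨x, hx, rfl⟩ := hy
    have : π x = ↑(e ⟨x, hx⟩) := by
      simp only [π, Equiv.trans_apply, Equiv.sumCompl_symm_apply_of_pos hx,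
        Equiv.sumCongr_apply, Sum.map_inl, Equiv.sumCompl_apply_inl]
    rw [this]
    exact (e ⟨x, hx⟩).2
  · rw [Finset.card_image_of_injective _ π.injective, ← h]

/-- number of permutations pulling `T` into the first `n` vertices. -/
def NS (m n : ℕ) (T : Finset (Fin m)) : ℕ :=
  (Finset.univ.filter (fun σ : Equiv.Perm (Fin m) => T ⊆ (Vset m n).image σ)).card

/-- number of even permutations pulling `T` into the first `n` vertices. -/
def NA (m n : ℕ) (T : Finset (Fin m)) : ℕ :=
  (Finset.univ.filter
    (fun σ : alternatingGroup (Fin m) => T ⊆ (Vset m n).image (σ : Equiv.Perm (Fin m)))).card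

lemma NS_const {m n : ℕ} {T T' : Finset (Fin m)} (h : T.card = T'.card) :
    NS m n T = NS m n T' := by
  obtain ⟨τ, hτ⟩ := exists_perm_image h
  unfold NS
  apply Finset.card_nbij' (fun σ => τ * σ) (fun σ => τ⁻¹ * σ)
  · intro σ hσ
    simp only [mem_coe, mem_filter, mem_univ, true_and] at hσ ⊢
    have : (Vset m n).image ⇑(τ * σ) = ((Vset m n).image σ).image τ := by
      rw [Finset.image_image]; rfl
    rw [this, ← hτ]
    exact Finset.image_subset_image hσ
  · intro σ hσ
    simp only [mem_coe, mem_filter, mem_univ, true_and] at hσ ⊢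
    have hc : (⇑τ⁻¹ : Fin m → Fin m) ∘ ⇑τ = id := by ext x; simp
    have h1 : (Vset m n).image ⇑(τ⁻¹ * σ) = ((Vset m n).image σ).image ⇑τ⁻¹ := by
      rw [Finset.image_image]; rfl
    have h2 : T = T'.image ⇑τ⁻¹ := by
      rw [← hτ, Finset.image_image, hc, Finset.image_id]
    rw [h1, h2]
    exact Finset.image_subset_image hσ
  · intro σ _; simp [mul_assoc]
  · intro σ _; simp [← mul_assoc]

lemma NS_sum {m n : ℕ} (hn : n ≤ m) :
    ∑ T ∈ Finset.powersetCard 3 (Finset.univ : Finset (Fin m)), NS m n T =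
      Nat.factorial m * Nat.choose n 3 := by
  unfold NS
  have key : ∀ σ : Equiv.Perm (Fin m),
      ∑ T ∈ Finset.powersetCard 3 (Finset.univ : Finset (Fin m)),
        (if T ⊆ (Vset m n).image σ then 1 else 0) = Nat.choose n 3 := by
    intro σ
    rw [← Finset.sum_filter]
    have h1 : (Finset.powersetCard 3 (Finset.univ : Finset (Fin m))).filter
        (fun T => T ⊆ (Vset m n).image σ) = Finset.powersetCard 3 ((Vset m n).image σ) := by
      ext T
      simp only [mem_filter, Finset.mem_powersetCard]
      constructor
      · rintro ⟨⟨-, hc⟩, hs⟩; exact ⟨hs, hc⟩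
      · rintro ⟨hs, hc⟩; exact ⟨⟨Finset.subset_univ _, hc⟩, hs⟩
    rw [h1, Finset.sum_const, smul_eq_mul, mul_one, Finset.card_powersetCard,
      Finset.card_image_of_injective _ σ.injective, Vset_card hn]
  calc ∑ T ∈ Finset.powersetCard 3 (Finset.univ : Finset (Fin m)),
        (Finset.univ.filter (fun σ : Equiv.Perm (Fin m) => T ⊆ (Vset m n).image σ)).card
      = ∑ T ∈ Finset.powersetCard 3 (Finset.univ : Finset (Fin m)),
          ∑ σ : Equiv.Perm (Fin m), (if T ⊆ (Vset m n).image σ then 1 else 0) := by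
        refine Finset.sum_congr rfl fun T _ => ?_
        rw [Finset.card_filter]
    _ = ∑ σ : Equiv.Perm (Fin m), ∑ T ∈ Finset.powersetCard 3 (Finset.univ : Finset (Fin m)),
          (if T ⊆ (Vset m n).image σ then 1 else 0) := Finset.sum_comm
    _ = ∑ _σ : Equiv.Perm (Fin m), Nat.choose n 3 :=
        Finset.sum_congr rfl fun σ _ => key σ
    _ = Nat.factorial m * Nat.choose n 3 := by
        rw [Finset.sum_const, smul_eq_mul, Finset.card_univ, Fintype.card_perm,
          Fintype.card_fin]

lemma NS_val {m n : ℕ} (hn : n ≤ m) {T : Finset (Fin m)} (hT : T.card = 3) :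
    NS m n T * Nat.choose m 3 = Nat.factorial m * Nat.choose n 3 := by
  have h1 : ∑ T' ∈ Finset.powersetCard 3 (Finset.univ : Finset (Fin m)), NS m n T' =
      NS m n T * Nat.choose m 3 := by
    have : ∀ T' ∈ Finset.powersetCard 3 (Finset.univ : Finset (Fin m)),
        NS m n T' = NS m n T := by
      intro T' hT'
      rw [Finset.mem_powersetCard] at hT'
      exact NS_const (hT'.2.trans hT.symm)
    rw [Finset.sum_congr rfl this, Finset.sum_const, smul_eq_mul,
      Finset.card_powersetCard, Finset.card_univ, Fintype.card_fin, mul_comm]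
  rw [← h1, NS_sum hn]

lemma swap_image_Vset {m n : ℕ} (h3 : 3 ≤ n) (hn : n ≤ m) (h0 : 0 < m) (h1 : 1 < m) :
    (Vset m n).image ⇑(Equiv.swap (⟨0, h0⟩ : Fin m) ⟨1, h1⟩) = Vset m n := by
  set a : Fin m := ⟨0, h0⟩
  set b : Fin m := ⟨1, h1⟩
  have ha : a ∈ Vset m n := by simp [Vset, a]; omega
  have hb : b ∈ Vset m n := by simp [Vset, b]; omega
  apply Finset.eq_of_subset_of_card_le
  · intro y hy
    rw [Finset.mem_image] at hy
    obtain ⟨x, hx, rfl⟩ := hy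
    rcases eq_or_ne x a with rfl | hxa
    · rwa [Equiv.swap_apply_left]
    rcases eq_or_ne x b with rfl | hxb
    · rwa [Equiv.swap_apply_right]
    · rwa [Equiv.swap_apply_of_ne_of_ne hxa hxb]
  · rw [Finset.card_image_of_injective _ (Equiv.swap a b).injective]

lemma NA_two {m n : ℕ} (h3 : 3 ≤ n) (hn : n ≤ m) (T : Finset (Fin m)) :
    NA m n T * 2 = NS m n T := by
  classical
  have hm3 : 3 ≤ m := le_trans h3 hn
  have h0 : 0 < m := by omega
  have h1 : 1 < m := by omega
  set a : Fin m := ⟨0, h0⟩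
  set b : Fin m := ⟨1, h1⟩
  have hab : a ≠ b := by simp [a, b, Fin.ext_iff]
  set τ := Equiv.swap a b with hτ
  set cond : Equiv.Perm (Fin m) → Prop := fun σ => T ⊆ (Vset m n).image σ with hcond
  have hsign : ∀ σ : Equiv.Perm (Fin m),
      Equiv.Perm.sign (σ * τ) = - Equiv.Perm.sign σ := by
    intro σ; rw [Equiv.Perm.sign_mul, Equiv.Perm.sign_swap hab, mul_neg_one]
  have hmemA : ∀ σ : Equiv.Perm (Fin m),
      σ ∈ alternatingGroup (Fin m) ↔ Equiv.Perm.sign σ = 1 :=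
    fun σ => Equiv.Perm.mem_alternatingGroup
  have hsplit :
      ((Finset.univ.filter cond).filter (fun σ => σ ∈ alternatingGroup (Fin m))).card +
      ((Finset.univ.filter cond).filter (fun σ => ¬ σ ∈ alternatingGroup (Fin m))).card =
        NS m n T := Finset.card_filter_add_card_filter_not _
  have hτV : ∀ σ : Equiv.Perm (Fin m), cond σ → cond (σ * τ) := by
    intro σ hσ
    show T ⊆ (Vset m n).image ⇑(σ * τ)
    have himg : (Vset m n).image ⇑(σ * τ) = ((Vset m n).image ⇑τ).image ⇑σ := by
      rw [Finset.image_image]; rfl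
    rw [himg, swap_image_Vset h3 hn h0 h1]
    exact hσ
  have heq :
      ((Finset.univ.filter cond).filter (fun σ => σ ∈ alternatingGroup (Fin m))).card =
      ((Finset.univ.filter cond).filter (fun σ => ¬ σ ∈ alternatingGroup (Fin m))).card := by
    apply Finset.card_nbij' (fun σ => σ * τ) (fun σ => σ * τ)
    · intro σ hσ
      simp only [mem_coe, Finset.mem_filter, Finset.mem_univ, true_and] at hσ ⊢
      refine ⟨hτV σ hσ.1, ?_⟩
      have h2 := (hmemA σ).1 hσ.2
      rw [hmemA, hsign, h2]
      decide
    · intro σ hσ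
      simp only [mem_coe, Finset.mem_filter, Finset.mem_univ, true_and] at hσ ⊢
      refine ⟨hτV σ hσ.1, (hmemA _).2 ?_⟩
      rcases Int.units_eq_one_or (Equiv.Perm.sign σ) with hs | hs
      · exact absurd ((hmemA σ).2 hs) hσ.2
      · rw [hsign, hs]; decide
    · intro σ _; simp [hτ, mul_assoc]
    · intro σ _; simp [hτ, mul_assoc]
  have hNA : NA m n T =
      ((Finset.univ.filter cond).filter (fun σ => σ ∈ alternatingGroup (Fin m))).card := by
    unfold NA
    refine Finset.card_nbij (fun σ => (σ : Equiv.Perm (Fin m))) ?_ ?_ ?_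
    · intro σ hσ
      simp only [mem_coe, Finset.mem_filter, Finset.mem_univ, true_and] at hσ ⊢
      exact ⟨hσ, σ.2⟩
    · intro σ hσ σ' hσ' h
      exact Subtype.coe_injective h
    · intro σ hσ
      simp only [Set.mem_image, mem_coe, Finset.mem_filter, Finset.mem_univ, true_and] at hσ ⊢
      exact ⟨⟨σ, hσ.2⟩, by simpa using hσ.1, rfl⟩
  omega

lemma num_identity {n m : ℕ} (h3 : 3 ≤ n) (hnm : n ≤ m) :
    n * (n - 1) * (n - 2) * Nat.factorial (m - 3) * Nat.choose m 3 =
      Nat.factorial m * Nat.choose n 3 := by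
  obtain ⟨a, rfl⟩ : ∃ a, n = a + 3 := ⟨n - 3, by omega⟩
  obtain ⟨b, rfl⟩ : ∃ b, m = b + 3 := ⟨m - 3, by omega⟩
  have h1 : Nat.choose (b + 3) 3 * Nat.factorial 3 * Nat.factorial b =
      Nat.factorial (b + 3) := by
    simpa using Nat.choose_mul_factorial_mul_factorial (by omega : 3 ≤ b + 3)
  have h2 : Nat.choose (a + 3) 3 * Nat.factorial 3 * Nat.factorial a =
      Nat.factorial (a + 3) := by
    simpa using Nat.choose_mul_factorial_mul_factorial (by omega : 3 ≤ a + 3)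
  have h3' : Nat.factorial (a + 3) = (a + 3) * (a + 2) * (a + 1) * Nat.factorial a := by
    simp [Nat.factorial_succ]; ring
  have h4 : Nat.choose (a + 3) 3 * Nat.factorial 3 = (a + 3) * (a + 2) * (a + 1) := by
    apply Nat.eq_of_mul_eq_mul_right (Nat.factorial_pos a)
    rw [h2, h3']
  have e1 : a + 3 - 1 = a + 2 := by omega
  have e2 : a + 3 - 2 = a + 1 := by omega
  have e3 : b + 3 - 3 = b := by omega
  rw [e1, e2, e3, ← h1, ← h4]
  ring

lemma NA_real {m n : ℕ} (h3 : 3 ≤ n) (hnm : n ≤ m) {T : Finset (Fin m)} (hT : T.card = 3) :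
    (NA m n T : ℝ) =
      ((n * (n - 1) * (n - 2) : ℕ) : ℝ) * ((Nat.factorial (m - 3) : ℝ) / 2) := by
  have hm3 : 3 ≤ m := le_trans h3 hnm
  have key : NA m n T * 2 * Nat.choose m 3 = Nat.factorial m * Nat.choose n 3 := by
    rw [NA_two h3 hnm, NS_val hnm hT]
  have key2 : NA m n T * 2 * Nat.choose m 3 =
      n * (n - 1) * (n - 2) * Nat.factorial (m - 3) * Nat.choose m 3 := by
    rw [key, num_identity h3 hnm]
  have hc : 0 < Nat.choose m 3 := Nat.choose_pos hm3
  have key3 : NA m n T * 2 = n * (n - 1) * (n - 2) * Nat.factorial (m - 3) :=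
    Nat.eq_of_mul_eq_mul_right hc key2
  have := congrArg (fun x : ℕ => (x : ℝ)) key3
  push_cast at this
  push_cast
  linarith


namespace SimplexSetting

variable {m : ℕ} {G : Type*} [Group G] (P : SimplexSetting m G)

lemma algAct_eq (σ : alternatingGroup (Fin m)) :
    P.algAct σ = ⇑(MonoidAlgebra.mapDomainRingHom ℝ (P.act σ : G →* G)) := rfl

lemma Se_image (σ : alternatingGroup (Fin m)) (e : Finset (Fin m)) :
    P.Se (e.image (σ : Equiv.Perm (Fin m))) = (P.Se e).image (P.act σ) := by
  have hact : ∀ s : G, P.act σ (P.act σ⁻¹ s) = s := by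
    intro s
    rw [← MulAut.mul_apply, ← map_mul, mul_inv_cancel, map_one, MulAut.one_apply]
  have hcoe : ((σ⁻¹ : alternatingGroup (Fin m)) : Equiv.Perm (Fin m)) =
      ((σ : Equiv.Perm (Fin m)))⁻¹ := rfl
  ext s
  simp only [Se, Finset.mem_filter, Finset.mem_image]
  constructor
  · rintro ⟨hs, hl⟩
    refine ⟨P.act σ⁻¹ s, ⟨P.act_mem σ⁻¹ s hs, ?_⟩, hact s⟩
    rw [P.lbl_equivariant σ⁻¹ s hs, hl, hcoe, Finset.image_image]
    have : (⇑((σ : Equiv.Perm (Fin m)))⁻¹ : Fin m → Fin m) ∘ ⇑(σ : Equiv.Perm (Fin m)) = id := by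
      ext x; simp
    rw [this, Finset.image_id]
  · rintro ⟨t, ⟨ht, hl⟩, rfl⟩
    exact ⟨P.act_mem σ t ht, by rw [P.lbl_equivariant σ t ht, hl]⟩

lemma De_image (σ : alternatingGroup (Fin m)) (e : Finset (Fin m)) :
    (MonoidAlgebra.mapDomainRingHom ℝ (P.act σ : G →* G)) (P.De e) =
      P.De (e.image (σ : Equiv.Perm (Fin m))) := by
  have hinj : Function.Injective ⇑(P.act σ) := (P.act σ).injective
  rw [De, De, Se_image, map_sub, map_natCast, map_sum,
    Finset.card_image_of_injective _ hinj,
    Finset.sum_image (fun x _ y _ h => hinj h)]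
  congr 1
  refine Finset.sum_congr rfl fun t _ => ?_
  exact MonoidAlgebra.mapDomain_single

/-- ordered pairs of edges sharing exactly one vertex. -/
def pairSet (m k : ℕ) : Finset (Finset (Fin m) × Finset (Fin m)) :=
  ((edges m k) ×ˢ (edges m k)).filter (fun p => (p.1 ∩ p.2).card = 1)

lemma Adj_eq_pairs (k : ℕ) : P.Adj k = ∑ p ∈ pairSet m k, P.De p.1 * P.De p.2 := by
  rw [Adj, pairSet, Finset.sum_filter, Finset.sum_product]
  refine Finset.sum_congr rfl fun e _ => ?_
  rw [Finset.sum_filter]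

lemma mem_edges {k : ℕ} {e : Finset (Fin m)} :
    e ∈ edges m k ↔ e.card = 2 ∧ e ⊆ Vset m k := by
  simp only [edges, Finset.mem_filter, Finset.mem_univ, true_and]
  constructor
  · rintro ⟨hc, hb⟩
    exact ⟨hc, fun i hi => by simp only [Vset, mem_filter, mem_univ, true_and]; exact hb i hi⟩
  · rintro ⟨hc, hb⟩
    refine ⟨hc, fun i hi => ?_⟩
    have := hb hi
    simpa [Vset] using this

lemma sum_pairs_reindex {n : ℕ} (hnm : n ≤ m) (σ : alternatingGroup (Fin m)) :
    ∑ p ∈ pairSet m n,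
        P.De (p.1.image (σ : Equiv.Perm (Fin m))) * P.De (p.2.image (σ : Equiv.Perm (Fin m))) =
      ∑ q ∈ (pairSet m m).filter
          (fun q => q.1 ∪ q.2 ⊆ (Vset m n).image (σ : Equiv.Perm (Fin m))),
        P.De q.1 * P.De q.2 := by
  set π : Equiv.Perm (Fin m) := (σ : Equiv.Perm (Fin m)) with hπ
  have hc1 : (⇑π.symm : Fin m → Fin m) ∘ ⇑π = id := by ext x; simp
  have hc2 : (⇑π : Fin m → Fin m) ∘ ⇑π.symm = id := by ext x; simp
  have hinv1 : ∀ s : Finset (Fin m), (s.image ⇑π).image ⇑π.symm = s := by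
    intro s; rw [Finset.image_image, hc1, Finset.image_id]
  have hinv2 : ∀ s : Finset (Fin m), (s.image ⇑π.symm).image ⇑π = s := by
    intro s; rw [Finset.image_image, hc2, Finset.image_id]
  refine Finset.sum_nbij' (fun p => (p.1.image ⇑π, p.2.image ⇑π))
    (fun q => (q.1.image ⇑π.symm, q.2.image ⇑π.symm)) ?_ ?_ ?_ ?_ ?_
  · intro p hp
    simp only [pairSet, Finset.mem_filter, Finset.mem_product, mem_edges] at hp ⊢
    obtain ⟨⟨⟨hc1', hs1⟩, ⟨hc2', hs2⟩⟩, hint⟩ := hp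
    have hA : (p.1.image ⇑π).card = 2 := by
      rw [Finset.card_image_of_injective _ π.injective]; exact hc1'
    have hB : p.1.image ⇑π ⊆ Vset m m := by
      intro i _; simp [Vset]
    have hC : (p.2.image ⇑π).card = 2 := by
      rw [Finset.card_image_of_injective _ π.injective]; exact hc2'
    have hD : p.2.image ⇑π ⊆ Vset m m := by
      intro i _; simp [Vset]
    have hE : ((p.1.image ⇑π) ∩ (p.2.image ⇑π)).card = 1 := by
      rw [← Finset.image_inter _ _ π.injective,
        Finset.card_image_of_injective _ π.injective]
      exact hint
    have hF : (p.1.image ⇑π) ∪ (p.2.image ⇑π) ⊆ (Vset m n).image ⇑π := by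
      rw [← Finset.image_union]
      exact Finset.image_subset_image (Finset.union_subset hs1 hs2)
    exact ⟨⟨⟨⟨hA, hB⟩, hC, hD⟩, hE⟩, hF⟩
  · intro q hq
    simp only [pairSet, Finset.mem_filter, Finset.mem_product, mem_edges] at hq ⊢
    obtain ⟨⟨⟨⟨hc1', hs1⟩, ⟨hc2', hs2⟩⟩, hint⟩, hun⟩ := hq
    have hq1 : q.1 ⊆ (Vset m n).image ⇑π := (Finset.subset_union_left).trans hun
    have hq2 : q.2 ⊆ (Vset m n).image ⇑π := (Finset.subset_union_right).trans hun
    have hA : (q.1.image ⇑π.symm).card = 2 := by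
      rw [Finset.card_image_of_injective _ π.symm.injective]; exact hc1'
    have hB : q.1.image ⇑π.symm ⊆ Vset m n := by
      calc q.1.image ⇑π.symm ⊆ ((Vset m n).image ⇑π).image ⇑π.symm :=
            Finset.image_subset_image hq1
        _ = Vset m n := hinv1 _
    have hC : (q.2.image ⇑π.symm).card = 2 := by
      rw [Finset.card_image_of_injective _ π.symm.injective]; exact hc2'
    have hD : q.2.image ⇑π.symm ⊆ Vset m n := by
      calc q.2.image ⇑π.symm ⊆ ((Vset m n).image ⇑π).image ⇑π.symm :=
            Finset.image_subset_image hq2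
        _ = Vset m n := hinv1 _
    have hE : ((q.1.image ⇑π.symm) ∩ (q.2.image ⇑π.symm)).card = 1 := by
      rw [← Finset.image_inter _ _ π.symm.injective,
        Finset.card_image_of_injective _ π.symm.injective]
      exact hint
    exact ⟨⟨⟨hA, hB⟩, hC, hD⟩, hE⟩
  · intro p _
    simp only [hinv1]
  · intro q _
    simp only [hinv2]
  · intro p _
    rfl

lemma pair_union_card {q : Finset (Fin m) × Finset (Fin m)} (hq : q ∈ pairSet m m) :
    (q.1 ∪ q.2).card = 3 := by
  simp only [pairSet, Finset.mem_filter, Finset.mem_product, mem_edges] at hq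
  have := Finset.card_union_add_card_inter q.1 q.2
  omega

end SimplexSetting

open SimplexSetting

/-- `Σ_{σ ∈ A_m} σ(Adj_n) = n(n-1)(n-2)·((m-3)!/2)·Adj_m` for `3 ≤ n ≤ m`. -/
theorem sum_algAct_Adj {m : ℕ} {G : Type*} [Group G]
    (P : SimplexSetting m G) (hm : 3 ≤ m) :
    ∀ n : ℕ, 3 ≤ n → n ≤ m →
      ∑ σ : alternatingGroup (Fin m), P.algAct σ (P.Adj n) =
        (((n * (n - 1) * (n - 2) : ℕ) : ℝ) * ((Nat.factorial (m - 3) : ℝ) / 2)) •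
          P.Adj m := by
  intro n hn3 hnm
  classical
  have step1 : ∀ σ : alternatingGroup (Fin m),
      P.algAct σ (P.Adj n) = ∑ q ∈ (pairSet m m).filter
          (fun q => q.1 ∪ q.2 ⊆ (Vset m n).image (σ : Equiv.Perm (Fin m))),
        P.De q.1 * P.De q.2 := by
    intro σ
    rw [P.Adj_eq_pairs, P.algAct_eq, map_sum, ← P.sum_pairs_reindex hnm σ]
    refine Finset.sum_congr rfl fun p _ => ?_
    rw [map_mul, P.De_image, P.De_image]
  calc ∑ σ : alternatingGroup (Fin m), P.algAct σ (P.Adj n)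
      = ∑ σ : alternatingGroup (Fin m), ∑ q ∈ pairSet m m,
          (if q.1 ∪ q.2 ⊆ (Vset m n).image (σ : Equiv.Perm (Fin m))
            then P.De q.1 * P.De q.2 else 0) := by
        refine Finset.sum_congr rfl fun σ _ => ?_
        rw [step1, Finset.sum_filter]
    _ = ∑ q ∈ pairSet m m, ∑ σ : alternatingGroup (Fin m),
          (if q.1 ∪ q.2 ⊆ (Vset m n).image (σ : Equiv.Perm (Fin m))
            then P.De q.1 * P.De q.2 else 0) := Finset.sum_comm
    _ = ∑ q ∈ pairSet m m, ((NA m n (q.1 ∪ q.2) : ℝ)) • (P.De q.1 * P.De q.2) := by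
        refine Finset.sum_congr rfl fun q hq => ?_
        rw [← Finset.sum_filter, Finset.sum_const, Nat.cast_smul_eq_nsmul]
        rfl
    _ = ∑ q ∈ pairSet m m,
          ((((n * (n - 1) * (n - 2) : ℕ) : ℝ) * ((Nat.factorial (m - 3) : ℝ) / 2)) •
            (P.De q.1 * P.De q.2)) := by
        refine Finset.sum_congr rfl fun q hq => ?_
        rw [NA_real hn3 hnm (pair_union_card hq)]
    _ = (((n * (n - 1) * (n - 2) : ℕ) : ℝ) * ((Nat.factorial (m - 3) : ℝ) / 2)) •
          P.Adj m := by
        rw [← Finset.smul_sum, P.Adj_eq_pairs]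


end
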